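/- arXiv:cmp-lg/9609008 — 3 statements merged into one kernel-verified Lean document; each statement's English description precedes it below -/
import Mathlib

section
/- For every real number p and every natural number n ≥ 0, the half-binomial probability satisfies the closed form B(p, n) = 1/2 + Σ_{i=0}^{⌈n/2⌉ - 1} (p - 1/2)·C(2i, i)·p^i·(1-p)^i (the half-binomial result); in particular, for n = 0 the empty sum gives B(p, 0) = 1/2. -/
open Finset

/-- Half-binomial probability: the probability that a Binomial(n, p) variable
exceeds n/2, with outcomes exactly equal to n/2 counted with weight 1/2. -/
noncomputable def halfBin (p : ℝ) (n : ℕ) : ℝ :=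
  (∑ i ∈ Finset.Icc (n / 2 + 1) n, (n.choose i : ℝ) * p ^ i * (1 - p) ^ (n - i)) +
    (if Even n then (1 / 2 : ℝ) * (n.choose (n / 2) : ℝ) * p ^ (n / 2) * (1 - p) ^ (n / 2)
     else 0)

lemma pascal_step (p : ℝ) (n k : ℕ) (hk : k ≤ n) :
    ∑ i ∈ Finset.Icc (k + 1) (n + 1), ((n + 1).choose i : ℝ) * p ^ i * (1 - p) ^ (n + 1 - i)
      = (∑ i ∈ Finset.Icc (k + 1) n, (n.choose i : ℝ) * p ^ i * (1 - p) ^ (n - i))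
        + p * ((n.choose k : ℝ) * p ^ k * (1 - p) ^ (n - k)) := by
  have hmap : Finset.Icc (k + 1) (n + 1) = (Finset.Icc k n).map (addRightEmbedding 1) := by
    rw [Finset.map_add_right_Icc]
  rw [hmap, Finset.sum_map]
  simp only [addRightEmbedding_apply]
  have hterm : ∀ i ∈ Finset.Icc k n,
      ((n + 1).choose (i + 1) : ℝ) * p ^ (i + 1) * (1 - p) ^ (n + 1 - (i + 1))
        = p * ((n.choose i : ℝ) * p ^ i * (1 - p) ^ (n - i))
          + (n.choose (i + 1) : ℝ) * p ^ (i + 1) * (1 - p) ^ (n + 1 - (i + 1)) := by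
    intro i hi
    rw [Nat.succ_sub_succ, Nat.choose_succ_succ]
    push_cast
    ring
  rw [Finset.sum_congr rfl hterm, Finset.sum_add_distrib]
  have h2 : ∑ i ∈ Finset.Icc k n, (n.choose (i + 1) : ℝ) * p ^ (i + 1) * (1 - p) ^ (n + 1 - (i + 1))
      = (1 - p) * ∑ i ∈ Finset.Icc (k + 1) n, (n.choose i : ℝ) * p ^ i * (1 - p) ^ (n - i) := by
    have hm := Finset.sum_map (Finset.Icc k n) (addRightEmbedding 1)
      (fun j => (n.choose j : ℝ) * p ^ j * (1 - p) ^ (n + 1 - j))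
    rw [Finset.map_add_right_Icc] at hm
    simp only [addRightEmbedding_apply] at hm
    rw [← hm, Finset.sum_Icc_succ_top (by omega : k + 1 ≤ n + 1)]
    simp only [Nat.choose_succ_self, Nat.cast_zero, zero_mul, add_zero]
    rw [Finset.mul_sum]
    apply Finset.sum_congr rfl
    intro i hi
    simp only [Finset.mem_Icc] at hi
    rw [show n + 1 - i = (n - i) + 1 by omega, pow_succ]
    ring
  rw [h2]
  have hins : Finset.Icc k n = insert k (Finset.Icc (k + 1) n) := by
    ext x; simp only [Finset.mem_Icc, Finset.mem_insert]; omega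
  rw [hins, Finset.sum_insert (by simp), ← Finset.mul_sum]
  ring

lemma odd_step (p : ℝ) (m : ℕ) :
    halfBin p (2 * m + 1)
      = halfBin p (2 * m) + (p - 1 / 2) * ((2 * m).choose m : ℝ) * p ^ m * (1 - p) ^ m := by
  unfold halfBin
  rw [show (2 * m + 1) / 2 = m by omega, show (2 * m) / 2 = m by omega,
    if_neg (by simp [Nat.even_add_one, Nat.even_mul] : ¬ Even (2 * m + 1)),
    if_pos (even_two_mul m), pascal_step p (2 * m) m (by omega),
    show 2 * m - m = m by omega]
  ring

lemma even_step (p : ℝ) (m : ℕ) : halfBin p (2 * m + 1 + 1) = halfBin p (2 * m + 1) := by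
  unfold halfBin
  rw [show (2 * m + 1 + 1) / 2 = m + 1 by omega, show (2 * m + 1) / 2 = m by omega,
    if_pos (by simp [Nat.even_add_one, Nat.even_mul] : Even (2 * m + 1 + 1)),
    if_neg (by simp [Nat.even_add_one, Nat.even_mul] : ¬ Even (2 * m + 1)),
    pascal_step p (2 * m + 1) (m + 1) (by omega)]
  have hins : Finset.Icc (m + 1) (2 * m + 1) = insert (m + 1) (Finset.Icc (m + 2) (2 * m + 1)) := by
    ext x; simp only [Finset.mem_Icc, Finset.mem_insert]; omega
  rw [hins, Finset.sum_insert (by simp)]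
  have hc : ((2 * m + 1 + 1).choose (m + 1) : ℝ) = 2 * ((2 * m + 1).choose (m + 1) : ℝ) := by
    rw [Nat.choose_succ_succ (2 * m + 1) m]
    rw [show (2 * m + 1).choose m = (2 * m + 1).choose (m + 1) from by
      rw [← Nat.choose_symm (by omega : m + 1 ≤ 2 * m + 1), show 2 * m + 1 - (m + 1) = m by omega]]
    push_cast; ring
  rw [hc, show 2 * m + 1 - (m + 1) = m by omega]
  ring

lemma halfBin_aux (p : ℝ) : ∀ m : ℕ,
    halfBin p (2 * m)
        = 1 / 2 + ∑ i ∈ Finset.range m, (p - 1 / 2) * ((2 * i).choose i : ℝ) * p ^ i * (1 - p) ^ i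
      ∧ halfBin p (2 * m + 1)
        = 1 / 2 + ∑ i ∈ Finset.range (m + 1),
            (p - 1 / 2) * ((2 * i).choose i : ℝ) * p ^ i * (1 - p) ^ i := by
  intro m
  induction m with
  | zero =>
      constructor
      · simp [halfBin]
      · rw [odd_step]
        simp [halfBin]
  | succ m ih =>
      have he : halfBin p (2 * (m + 1)) = halfBin p (2 * m + 1) := by
        rw [show 2 * (m + 1) = 2 * m + 1 + 1 by ring, even_step]
      constructor
      · rw [he, ih.2]
      · rw [odd_step, he, ih.2, Finset.sum_range_succ _ (m + 1)]
        ring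

theorem halfBin_closed_form (p : ℝ) (n : ℕ) :
    halfBin p n =
      1 / 2 +
        ∑ i ∈ Finset.range ((n + 1) / 2),
          (p - 1 / 2) * ((2 * i).choose i : ℝ) * p ^ i * (1 - p) ^ i := by
  rcases Nat.even_or_odd n with ⟨m, rfl⟩ | ⟨m, rfl⟩
  · rw [show m + m = 2 * m by ring, show (2 * m + 1) / 2 = m by omega]
    exact (halfBin_aux p m).1
  · rw [show (2 * m + 1 + 1) / 2 = m + 1 by omega]
    exact (halfBin_aux p m).2
end

section
/- For every real number p and every even natural number n ≥ 2, the half-binomial probability satisfies B(p, n) = B(p, n-1). -/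
open Finset

theorem halfBin_even (p : ℝ) (n : ℕ) (hn : 2 ≤ n) (hev : Even n) :
    halfBin p n = halfBin p (n - 1) := by
  obtain ⟨m, rfl⟩ : ∃ m, n = 2 * m := by obtain ⟨r, hr⟩ := hev; exact ⟨r, by omega⟩
  have hm : 1 ≤ m := by omega
  set q : ℝ := 1 - p with hq
  have hpq : p + q = 1 := by ring
  have hdiv : 2 * m / 2 = m := by omega
  have hdiv' : (2 * m - 1) / 2 = m - 1 := by omega
  have hodd : ¬ Even (2 * m - 1) := by
    simp [Nat.even_sub (by omega : 1 ≤ 2*m), Nat.even_mul]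
  set S : ℝ := ∑ i ∈ Icc m (2 * m - 1), ((2*m-1).choose i : ℝ) * p ^ i * q ^ (2*m-1 - i)
    with hS
  have hm1 : m - 1 + 1 = m := by omega
  rw [halfBin, halfBin, hdiv, hdiv', if_pos (even_two_mul m), if_neg hodd, hm1, add_zero,
    ← hS]
  -- Pascal split
  have pascal : ∀ i ∈ Icc (m+1) (2*m),
      ((2*m).choose i : ℝ) * p ^ i * q ^ (2*m - i)
        = ((2*m-1).choose (i-1) : ℝ) * p ^ i * q ^ (2*m - i)
          + ((2*m-1).choose i : ℝ) * p ^ i * q ^ (2*m - i) := by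
    intro i hi
    simp only [mem_Icc] at hi
    have h1 : (2*m).choose i = (2*m-1).choose (i-1) + (2*m-1).choose i := by
      obtain ⟨j, rfl⟩ : ∃ j, i = j + 1 := ⟨i - 1, by omega⟩
      have h2 : 2*m = (2*m-1) + 1 := by omega
      rw [h2, Nat.choose_succ_succ]
      simp
    rw [h1]
    push_cast
    ring
  rw [Finset.sum_congr rfl pascal, Finset.sum_add_distrib]
  -- shift the first sum
  have shift : ∑ i ∈ Icc (m+1) (2*m), ((2*m-1).choose (i-1) : ℝ) * p ^ i * q ^ (2*m - i)
      = p * S := by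
    rw [hS, Finset.mul_sum]
    refine Finset.sum_nbij' (fun i => i - 1) (fun j => j + 1) ?_ ?_ ?_ ?_ ?_
    · intro a ha; simp only [mem_Icc] at *; omega
    · intro a ha; simp only [mem_Icc] at *; omega
    · intro a ha; simp only [mem_Icc] at ha; omega
    · intro a ha; simp only [mem_Icc] at ha; omega
    · intro a ha
      simp only [mem_Icc] at ha
      obtain ⟨j, rfl⟩ : ∃ j, a = j + 1 := ⟨a - 1, by omega⟩
      have h3 : 2*m - (j+1) = 2*m-1 - j := by omega
      simp only [Nat.add_sub_cancel, h3]
      ring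
  rw [shift]
  -- second sum
  have htop : (2*m) = (2*m-1) + 1 := by omega
  have second : ∑ i ∈ Icc (m+1) (2*m), ((2*m-1).choose i : ℝ) * p ^ i * q ^ (2*m - i)
      = q * S - ((2*m-1).choose m : ℝ) * p ^ m * q ^ m := by
    rw [htop, Finset.sum_Icc_succ_top (by omega)]
    simp only [Nat.add_sub_cancel]
    have hz : ((2*m-1).choose (2*m-1+1) : ℝ) = 0 := by
      norm_cast
      exact Nat.choose_eq_zero_of_lt (by omega)
    have hbot : Icc m (2*m-1) = insert m (Icc (m+1) (2*m-1)) := by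
      ext x; simp only [mem_Icc, mem_insert]; omega
    have congr2 : ∑ i ∈ Icc (m+1) (2*m-1), ((2*m-1).choose i : ℝ) * p ^ i * q ^ (2*m-1+1 - i)
        = ∑ i ∈ Icc (m+1) (2*m-1), ((2*m-1).choose i : ℝ) * p ^ i * q ^ (2*m-1 - i) * q := by
      refine Finset.sum_congr rfl fun i hi => ?_
      simp only [mem_Icc] at hi
      have : 2*m-1+1 - i = (2*m-1-i) + 1 := by omega
      rw [this, pow_succ]; ring
    have hpow : q ^ (2*m-1 - m) * q = q ^ m := by
      rw [← pow_succ]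
      congr 1
      omega
    rw [hz, congr2, hS, hbot, Finset.sum_insert (by simp), ← Finset.sum_mul, mul_add]
    linear_combination (-((2*m-1).choose m : ℝ) * p ^ m) * hpow
  rw [second]
  -- the choose identity
  have hch : ((2*m).choose m : ℝ) = 2 * ((2*m-1).choose m : ℝ) := by
    have h1 : (2*m).choose m = (2*m-1).choose (m-1) + (2*m-1).choose m := by
      obtain ⟨j, rfl⟩ : ∃ j, m = j + 1 := ⟨m - 1, by omega⟩
      have h2 : 2*(j+1) = (2*(j+1)-1) + 1 := by omega
      rw [h2, Nat.choose_succ_succ]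
      simp
    have h2 : (2*m-1).choose (m-1) = (2*m-1).choose m := by
      have : 2*m-1 - m = m - 1 := by omega
      rw [← this, Nat.choose_symm (by omega)]
    rw [h1, h2]
    push_cast
    ring
  rw [hch]
  have : p * S + q * S = S := by rw [← add_mul, hpq, one_mul]
  linarith [this]
end

section
/- For every real number p with 1/2 < p ≤ 1 and every natural number n ≥ 1, the half-binomial probability is nondecreasing in n: B(p, n) ≥ B(p, n-1). -/
open Finset

private lemma shift_sum (g : ℕ → ℝ) (k n : ℕ) :
    ∑ i ∈ Icc (k+1) (n+1), g i = ∑ j ∈ Icc k n, g (j+1) := by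
  rw [← Finset.map_add_right_Icc]
  simp only [Finset.sum_map, addRightEmbedding_apply]

private lemma icc_insert (k n : ℕ) (hk : k ≤ n) :
    Icc k n = insert k (Icc (k+1) n) := by
  ext x
  simp only [Finset.mem_Icc, Finset.mem_insert]
  omega

private lemma key (p : ℝ) (n k : ℕ) (hk : k ≤ n) :
    ∑ i ∈ Icc (k+1) (n+1), ((n+1).choose i : ℝ) * p ^ i * (1-p) ^ (n+1-i)
    = (∑ i ∈ Icc (k+1) n, (n.choose i : ℝ) * p ^ i * (1-p) ^ (n-i))
      + p * ((n.choose k : ℝ) * p ^ k * (1-p) ^ (n-k)) := by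
  rw [shift_sum]
  have h1 : ∀ j ∈ Icc k n, ((n+1).choose (j+1) : ℝ) * p ^ (j+1) * (1-p) ^ (n+1-(j+1))
      = (n.choose j : ℝ) * p ^ j * (1-p) ^ (n-j) * p
        + (n.choose (j+1) : ℝ) * p ^ (j+1) * (1-p) ^ (n+1-(j+1)) := by
    intro j hj
    rw [Nat.choose_succ_succ]
    push_cast
    ring
  rw [Finset.sum_congr rfl h1, Finset.sum_add_distrib]
  have h2 : ∑ j ∈ Icc k n, (n.choose (j+1) : ℝ) * p ^ (j+1) * (1-p) ^ (n+1-(j+1))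
      = ∑ i ∈ Icc (k+1) n, ((n.choose i : ℝ) * p ^ i * (1-p) ^ (n-i)) * (1-p) := by
    rw [← shift_sum (fun i => (n.choose i : ℝ) * p ^ i * (1-p) ^ (n+1-i)) k n]
    rw [Finset.sum_Icc_succ_top (by omega : k+1 ≤ n+1), Nat.choose_succ_self]
    simp only [Nat.cast_zero, zero_mul, add_zero]
    refine Finset.sum_congr rfl (fun i hi => ?_)
    simp only [Finset.mem_Icc] at hi
    have h : n + 1 - i = (n - i) + 1 := by omega
    rw [h, pow_succ]; ring
  rw [h2, icc_insert k n hk, Finset.sum_insert (by simp)]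
  have h3 : ∑ x ∈ Icc (k+1) n, ((n.choose x : ℝ) * p ^ x * (1-p) ^ (n-x) * p)
      + ∑ i ∈ Icc (k+1) n, ((n.choose i : ℝ) * p ^ i * (1-p) ^ (n-i)) * (1-p)
      = ∑ i ∈ Icc (k+1) n, (n.choose i : ℝ) * p ^ i * (1-p) ^ (n-i) := by
    rw [← Finset.sum_add_distrib]
    exact Finset.sum_congr rfl (fun i _ => by ring)
  linarith

private lemma choose_half (m : ℕ) :
    ((2*m+2).choose (m+1)) = 2 * ((2*m+1).choose (m+1)) := by
  have h1 : (2*m+2).choose (m+1) = (2*m+1).choose m + (2*m+1).choose (m+1) :=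
    Nat.choose_succ_succ (2*m+1) m
  have h2 : (2*m+1).choose m = (2*m+1).choose (m+1) := by
    have := Nat.choose_symm (n := 2*m+1) (k := m+1) (by omega)
    rw [show 2*m+1-(m+1) = m from by omega] at this
    omega
  omega

theorem halfBin_mono (p : ℝ) (hp : 1 / 2 < p) (hp1 : p ≤ 1) (n : ℕ) (hn : 1 ≤ n) :
    halfBin p (n - 1) ≤ halfBin p n := by
  have hp0 : (0:ℝ) ≤ p := by linarith
  have hq0 : (0:ℝ) ≤ 1 - p := by linarith
  rcases Nat.even_or_odd n with he | ho
  · -- n even : equality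
    obtain ⟨m, hm⟩ : ∃ m, n = 2*m+2 := by
      obtain ⟨k, hk⟩ := he; exact ⟨k-1, by omega⟩
    subst hm
    rw [show 2*m+2-1 = 2*m+1 from by omega]
    rw [halfBin, halfBin, show (2*m+2)/2 = m+1 from by omega,
      show (2*m+1)/2 = m from by omega]
    have e4 : Even (2*m+2) := ⟨m+1, by ring⟩
    have e5 : ¬ Even (2*m+1) := by rw [Nat.even_iff]; omega
    simp only [e4, e5, if_true, if_false, ite_true, ite_false]
    have hkey := key p (2*m+1) (m+1) (by omega)
    simp only [show 2*m+1+1 = 2*m+2 from rfl] at hkey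
    rw [hkey, icc_insert (m+1) (2*m+1) (by omega), Finset.sum_insert (by simp),
      show 2*m+1-(m+1) = m from by omega]
    have hc : (((2*m+2).choose (m+1)) : ℝ) = 2 * ((2*m+1).choose (m+1)) := by
      exact_mod_cast choose_half m
    rw [hc]
    apply le_of_eq
    ring
  · -- n odd
    obtain ⟨m, hm⟩ := ho
    subst hm
    rw [show 2*m+1-1 = 2*m from by omega]
    rw [halfBin, halfBin, show (2*m+1)/2 = m from by omega,
      show (2*m)/2 = m from by omega]
    have e4 : Even (2*m) := ⟨m, by ring⟩
    have e5 : ¬ Even (2*m+1) := by rw [Nat.even_iff]; omega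
    simp only [e4, e5, if_true, if_false, ite_true, ite_false]
    have hkey := key p (2*m) m (by omega)
    rw [hkey, show 2*m-m = m from by omega]
    have hC : (0:ℝ) ≤ ((2*m).choose m : ℝ) := Nat.cast_nonneg _
    have hx : (0:ℝ) ≤ p ^ m * (1-p) ^ m :=
      mul_nonneg (pow_nonneg hp0 m) (pow_nonneg hq0 m)
    nlinarith [mul_nonneg hC hx]
end
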